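/- Visitation-distribution TV bound: for any two policies π and π_ref on a finite MDP with discount γ ∈ (0,1), the total variation distance between their normalized discounted state visitation distributions satisfies TV(d^π, d^{π_ref}) ≤ (γ/(1-γ)) E_{s ∼ d^{π_ref}}[TV(π, π_ref)(s)]. -/
import Mathlib


open scoped BigOperators

/-- A finite Markov decision process. -/
structure MDP (S A : Type*) [Fintype S] [Fintype A] where
  p : S → A → S → ℝ
  p_nonneg : ∀ s a s', 0 ≤ p s a s'
  p_sum : ∀ s a, ∑ s', p s a s' = 1
  r : S → A → ℝ
  ρ0 : S → ℝ
  ρ0_nonneg : ∀ s, 0 ≤ ρ0 s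
  ρ0_sum : ∑ s, ρ0 s = 1
  γ : ℝ
  γ_pos : 0 < γ
  γ_lt_one : γ < 1

variable {S A : Type*} [Fintype S] [Fintype A]

/-- A (stationary stochastic) policy: a probability distribution over actions at every state. -/
noncomputable def IsPolicy (π : S → A → ℝ) : Prop :=
  (∀ s a, 0 ≤ π s a) ∧ ∀ s, ∑ a, π s a = 1

/-- The state occupancy distribution at time `t`, starting from initial distribution `μ`. -/
noncomputable def stateDistFrom (M : MDP S A) (π : S → A → ℝ) (μ : S → ℝ) : ℕ → S → ℝ
  | 0 => μ
  | t + 1 => fun s' => ∑ s, ∑ a, stateDistFrom M π μ t s * π s a * M.p s a s'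

/-- The normalized discounted state visitation distribution, starting from `μ`. -/
noncomputable def visitFrom (M : MDP S A) (π : S → A → ℝ) (μ : S → ℝ) (s : S) : ℝ :=
  (1 - M.γ) * ∑' t, M.γ ^ t * stateDistFrom M π μ t s

/-- The normalized discounted state visitation distribution `d^π`. -/
noncomputable def visit (M : MDP S A) (π : S → A → ℝ) (s : S) : ℝ :=
  visitFrom M π M.ρ0 s

/-- Expected total discounted reward starting from initial distribution `μ`. -/
noncomputable def Jfrom (M : MDP S A) (π : S → A → ℝ) (μ : S → ℝ) : ℝ :=
  ∑' t, M.γ ^ t * ∑ s, ∑ a, stateDistFrom M π μ t s * π s a * M.r s a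

/-- The performance objective `J(π)`. -/
noncomputable def Jval (M : MDP S A) (π : S → A → ℝ) : ℝ :=
  Jfrom M π M.ρ0

/-- The state value function `V^π(s)`. -/
noncomputable def Vval [DecidableEq S] (M : MDP S A) (π : S → A → ℝ) (s : S) : ℝ :=
  Jfrom M π (fun s' => if s' = s then 1 else 0)

/-- The state-action value function `Q^π(s,a)`. -/
noncomputable def Qval [DecidableEq S] (M : MDP S A) (π : S → A → ℝ) (s : S) (a : A) : ℝ :=
  M.r s a + M.γ * ∑ s', M.p s a s' * Vval M π s'

/-- The advantage function `A^π(s,a) = Q^π(s,a) - V^π(s)`. -/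
noncomputable def Adv [DecidableEq S] (M : MDP S A) (π : S → A → ℝ) (s : S) (a : A) : ℝ :=
  Qval M π s a - Vval M π s

/-- Total variation distance between the action distributions of two policies at state `s`. -/
noncomputable def tvPol (π π' : S → A → ℝ) (s : S) : ℝ :=
  (1 / 2) * ∑ a, |π s a - π' s a|

section Aux

variable {S A : Type*} [Fintype S] [Fintype A]

lemma sd_nonneg (M : MDP S A) {π : S → A → ℝ} (hπ : IsPolicy π) {μ : S → ℝ}
    (hμ : ∀ s, 0 ≤ μ s) : ∀ t s, 0 ≤ stateDistFrom M π μ t s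
  | 0, s => hμ s
  | (t+1), s' => Finset.sum_nonneg fun s _ => Finset.sum_nonneg fun a _ =>
      mul_nonneg (mul_nonneg (sd_nonneg M hπ hμ t s) (hπ.1 s a)) (M.p_nonneg s a s')

lemma sd_sum (M : MDP S A) {π : S → A → ℝ} (hπ : IsPolicy π) {μ : S → ℝ}
    (hμ : ∑ s, μ s = 1) : ∀ t, ∑ s, stateDistFrom M π μ t s = 1 := by
  intro t
  induction t with
  | zero => simpa [stateDistFrom] using hμ
  | succ t ih =>
    show ∑ s', ∑ s, ∑ a, stateDistFrom M π μ t s * π s a * M.p s a s' = 1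
    rw [Finset.sum_comm]
    have h : ∀ s, ∑ s', ∑ a, stateDistFrom M π μ t s * π s a * M.p s a s'
        = stateDistFrom M π μ t s := by
      intro s
      rw [Finset.sum_comm]
      simp_rw [mul_assoc, ← Finset.mul_sum, M.p_sum, mul_one, hπ.2, mul_one]
    simp [h, ih]

lemma sd_le_one (M : MDP S A) {π : S → A → ℝ} (hπ : IsPolicy π) {μ : S → ℝ}
    (hμ0 : ∀ s, 0 ≤ μ s) (hμ : ∑ s, μ s = 1) (t : ℕ) (s : S) :
    stateDistFrom M π μ t s ≤ 1 := by
  rw [← sd_sum M hπ hμ t]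
  exact Finset.single_le_sum (fun s _ => sd_nonneg M hπ hμ0 t s) (Finset.mem_univ s)

lemma sd_summable (M : MDP S A) {π : S → A → ℝ} (hπ : IsPolicy π) {μ : S → ℝ}
    (hμ0 : ∀ s, 0 ≤ μ s) (hμ : ∑ s, μ s = 1) (s : S) :
    Summable (fun t => M.γ ^ t * stateDistFrom M π μ t s) := by
  apply Summable.of_nonneg_of_le
    (fun t => mul_nonneg (pow_nonneg M.γ_pos.le t) (sd_nonneg M hπ hμ0 t s))
    (fun t => by
      have := sd_le_one M hπ hμ0 hμ t s
      nlinarith [pow_nonneg M.γ_pos.le t])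
    (summable_geometric_of_lt_one M.γ_pos.le M.γ_lt_one)

lemma visitFrom_nonneg (M : MDP S A) {π : S → A → ℝ} (hπ : IsPolicy π) {μ : S → ℝ}
    (hμ0 : ∀ s, 0 ≤ μ s) (s : S) : 0 ≤ visitFrom M π μ s := by
  apply mul_nonneg (by linarith [M.γ_lt_one])
  exact tsum_nonneg fun t => mul_nonneg (pow_nonneg M.γ_pos.le t) (sd_nonneg M hπ hμ0 t s)

lemma visitFrom_fix (M : MDP S A) {π : S → A → ℝ} (hπ : IsPolicy π) {μ : S → ℝ}
    (hμ0 : ∀ s, 0 ≤ μ s) (hμ : ∑ s, μ s = 1) (s' : S) :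
    visitFrom M π μ s' = (1 - M.γ) * μ s'
      + M.γ * ∑ s, ∑ a, visitFrom M π μ s * π s a * M.p s a s' := by
  have key : (∑' t, M.γ ^ t * stateDistFrom M π μ t s') = μ s'
      + M.γ * ∑ s, ∑ a, (∑' t, M.γ ^ t * stateDistFrom M π μ t s) * π s a * M.p s a s' := by
    rw [Summable.tsum_eq_zero_add (sd_summable M hπ hμ0 hμ s')]
    simp only [pow_zero, one_mul]
    congr 1
    have h1 : ∀ t : ℕ, M.γ ^ (t+1) * stateDistFrom M π μ (t+1) s'
        = M.γ * ∑ s, ∑ a, (M.γ ^ t * stateDistFrom M π μ t s) * π s a * M.p s a s' := by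
      intro t
      show M.γ ^ (t+1) * (∑ s, ∑ a, stateDistFrom M π μ t s * π s a * M.p s a s') = _
      simp only [Finset.mul_sum]
      exact Finset.sum_congr rfl fun s _ => Finset.sum_congr rfl fun a _ => by ring
    rw [tsum_congr h1, tsum_mul_left]
    congr 1
    rw [Summable.tsum_finsetSum (fun s _ => summable_sum (fun a _ =>
      ((sd_summable M hπ hμ0 hμ s).mul_right (π s a)).mul_right (M.p s a s')))]
    refine Finset.sum_congr rfl fun s _ => ?_
    rw [Summable.tsum_finsetSum (fun a _ =>
      ((sd_summable M hπ hμ0 hμ s).mul_right (π s a)).mul_right (M.p s a s'))]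
    refine Finset.sum_congr rfl fun a _ => ?_
    rw [tsum_mul_right, tsum_mul_right]
  unfold visitFrom
  rw [key]
  have hγ : (0:ℝ) < 1 - M.γ := by linarith [M.γ_lt_one]
  rw [mul_add]
  congr 1
  rw [Finset.mul_sum, Finset.mul_sum, Finset.mul_sum]
  congr 1; ext s
  rw [Finset.mul_sum, Finset.mul_sum, Finset.mul_sum]
  congr 1; ext a
  ring

end Aux

/-- Visitation-distribution TV bound:
`TV(d^π, d^{π_ref}) ≤ (γ/(1-γ)) E_{s ∼ d^{π_ref}}[TV(π, π_ref)(s)]`. -/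
theorem visitation_tv_bound
    (M : MDP S A) (π πref : S → A → ℝ) (hπ : IsPolicy π) (hπref : IsPolicy πref) :
    (1 / 2) * ∑ s, |visit M π s - visit M πref s|
      ≤ (M.γ / (1 - M.γ)) * ∑ s, visit M πref s * tvPol π πref s := by
  have hγ1 : (0:ℝ) < 1 - M.γ := by linarith [M.γ_lt_one]
  have hd2nn : ∀ s, 0 ≤ visit M πref s := fun s => visitFrom_nonneg M hπref M.ρ0_nonneg s
  have fix1 : ∀ s', visit M π s' = (1 - M.γ) * M.ρ0 s'
      + M.γ * ∑ s, ∑ a, visit M π s * π s a * M.p s a s' :=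
    fun s' => visitFrom_fix M hπ M.ρ0_nonneg M.ρ0_sum s'
  have fix2 : ∀ s', visit M πref s' = (1 - M.γ) * M.ρ0 s'
      + M.γ * ∑ s, ∑ a, visit M πref s * πref s a * M.p s a s' :=
    fun s' => visitFrom_fix M hπref M.ρ0_nonneg M.ρ0_sum s'
  have habs : ∀ s', |visit M π s' - visit M πref s'|
      ≤ M.γ * ∑ s, ∑ a, (|visit M π s - visit M πref s| * π s a
          + visit M πref s * |π s a - πref s a|) * M.p s a s' := by
    intro s'
    have hΔ : visit M π s' - visit M πref s'
        = M.γ * ∑ s, ∑ a, (visit M π s * π s a - visit M πref s * πref s a) * M.p s a s' := by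
      rw [fix1 s', fix2 s']
      have e : ∑ s, ∑ a, (visit M π s * π s a - visit M πref s * πref s a) * M.p s a s'
          = (∑ s, ∑ a, visit M π s * π s a * M.p s a s')
            - ∑ s, ∑ a, visit M πref s * πref s a * M.p s a s' := by
        simp [sub_mul, Finset.sum_sub_distrib]
      rw [e]; ring
    rw [hΔ, abs_mul, abs_of_nonneg M.γ_pos.le]
    apply mul_le_mul_of_nonneg_left _ M.γ_pos.le
    refine (Finset.abs_sum_le_sum_abs _ _).trans (Finset.sum_le_sum fun s _ => ?_)
    refine (Finset.abs_sum_le_sum_abs _ _).trans (Finset.sum_le_sum fun a _ => ?_)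
    rw [abs_mul, abs_of_nonneg (M.p_nonneg s a s')]
    apply mul_le_mul_of_nonneg_right _ (M.p_nonneg s a s')
    have decomp : visit M π s * π s a - visit M πref s * πref s a
        = (visit M π s - visit M πref s) * π s a + visit M πref s * (π s a - πref s a) := by
      ring
    rw [decomp]
    calc |(visit M π s - visit M πref s) * π s a + visit M πref s * (π s a - πref s a)|
        ≤ |(visit M π s - visit M πref s) * π s a| + |visit M πref s * (π s a - πref s a)| :=
          abs_add_le _ _
      _ = |visit M π s - visit M πref s| * π s a + visit M πref s * |π s a - πref s a| := by
          rw [abs_mul, abs_mul, abs_of_nonneg (hπ.1 s a), abs_of_nonneg (hd2nn s)]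
  have hsum : ∑ s', |visit M π s' - visit M πref s'|
      ≤ M.γ * ∑ s', ∑ s, ∑ a, (|visit M π s - visit M πref s| * π s a
          + visit M πref s * |π s a - πref s a|) * M.p s a s' := by
    rw [Finset.mul_sum]
    exact Finset.sum_le_sum fun s' _ => habs s'
  have hRHS : ∑ s', ∑ s, ∑ a, (|visit M π s - visit M πref s| * π s a
          + visit M πref s * |π s a - πref s a|) * M.p s a s'
      = (∑ s, |visit M π s - visit M πref s|)
        + 2 * ∑ s, visit M πref s * tvPol π πref s := by
    rw [Finset.sum_comm]
    have h : ∀ s, ∑ s', ∑ a, (|visit M π s - visit M πref s| * π s a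
          + visit M πref s * |π s a - πref s a|) * M.p s a s'
        = |visit M π s - visit M πref s|
          + visit M πref s * ∑ a, |π s a - πref s a| := by
      intro s
      rw [Finset.sum_comm]
      simp_rw [← Finset.mul_sum, M.p_sum, mul_one]
      rw [Finset.sum_add_distrib, ← Finset.mul_sum, ← Finset.mul_sum, hπ.2, mul_one]
    rw [Finset.sum_congr rfl fun s _ => h s, Finset.sum_add_distrib]
    congr 1
    rw [Finset.mul_sum]
    refine Finset.sum_congr rfl fun s _ => ?_
    unfold tvPol
    ring
  rw [hRHS] at hsum
  rw [show M.γ / (1 - M.γ) * (∑ s, visit M πref s * tvPol π πref s)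
      = (M.γ * ∑ s, visit M πref s * tvPol π πref s) / (1 - M.γ) from
    div_mul_eq_mul_div _ _ _, le_div_iff₀ hγ1]
  nlinarith [hsum, Finset.sum_nonneg fun s (_ : s ∈ Finset.univ) =>
    abs_nonneg (visit M π s - visit M πref s)]
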